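/- Let s ∈ ℝ, ω ∈ ℝ with ω ≠ 0, and ℓ ∈ ℤ with ℓ ≠ 0. If u : ℝ → ℂ is four times continuously differentiable, bounded, and satisfies u''''(ξ) − s·u'(ξ) + iωℓ·u(ξ) = 0 for all ξ ∈ ℝ, then u is identically zero. -/

import Mathlib

open Polynomial Set


/-- No purely imaginary root. -/
lemma re_ne_zero_of_root (a b z : ℂ) (ha : a.im = 0) (hbre : b.re = 0) (hbim : b.im ≠ 0)
    (hz : z^4 - a*z + b = 0) : z.re ≠ 0 := by
  intro hre
  have h1 := congrArg Complex.re hz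
  have h2 := congrArg Complex.im hz
  simp only [Complex.add_re, Complex.sub_re, Complex.mul_re, Complex.mul_im,
    Complex.add_im, Complex.sub_im, Complex.zero_re, Complex.zero_im,
    show z^4 = z*z*z*z by ring, hre, ha, hbre] at h1 h2
  ring_nf at h1 h2
  have hy : z.im = 0 := by
    have : z.im^4 = 0 := by linarith
    exact pow_eq_zero_iff (by norm_num) |>.mp this
  rw [hy] at h2; simp at h2; exact hbim h2

/-- No common root with the derivative 4z^3 - a. -/
lemma no_common_root (a b z : ℂ) (ha : a.im = 0) (hbre : b.re = 0) (hbim : b.im ≠ 0)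
    (hz : z^4 - a*z + b = 0) (hz' : 4*z^3 - a = 0) : False := by
  have hb : b = 3/4 * a * z := by linear_combination hz - z/4 * hz'
  have hane : a ≠ 0 := by
    rintro rfl
    rw [hb] at hbim; simp at hbim
  -- z is purely imaginary: z = 4b/(3a)
  have hzre : z.re = 0 := by
    have hz2 : z = 4*b/(3*a) := by field_simp [hb]; rw [hb]; ring
    rw [hz2, Complex.div_re]
    simp [Complex.mul_re, Complex.mul_im, hbre, ha]
  -- then 4z^3 = a forces a.re = 0, but a.im = 0 too so a = 0
  have h1 := congrArg Complex.re hz'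
  simp only [Complex.sub_re, Complex.mul_re, Complex.mul_im, show z^3 = z*z*z by ring,
    hzre, ] at h1
  ring_nf at h1
  norm_num at h1
  apply hane
  apply Complex.ext <;> simp [ha, h1]

/-- Existence of 4 distinct roots with nonzero real parts. -/
lemma exists_roots (a b : ℂ) (ha : a.im = 0) (hbre : b.re = 0) (hbim : b.im ≠ 0) :
    ∃ lam : Fin 4 → ℂ, Function.Injective lam ∧ (∀ i, (lam i)^4 = a * lam i - b) ∧
      (∀ i, (lam i).re ≠ 0) := by
  set p : ℂ[X] := X^4 - C a * X + C b with hp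
  have hmon : p.Monic := by rw [hp]; monicity!
  have hdeg : p.natDegree = 4 := by rw [hp]; compute_degree!
  have hderiv : p.derivative = C 4 * X^3 - C a := by
    rw [hp]; simp [derivative_X_pow]; rw [← C_1, ← C_add]; norm_num
  have hsep : p.Separable := by
    rw [Polynomial.Separable, Polynomial.isCoprime_iff_aeval_ne_zero_of_isAlgClosed (k := ℂ) ℂ]
    intro z
    by_contra h
    push_neg at h
    obtain ⟨h1, h2⟩ := h
    rw [hderiv] at h2
    simp only [hp, map_add, map_sub, map_mul, map_pow, Polynomial.aeval_X, Polynomial.aeval_C,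
      Algebra.algebraMap_self_apply] at h1 h2
    exact no_common_root a b z ha hbre hbim (by linear_combination h1) (by linear_combination h2)
  have hnd : p.roots.Nodup := Polynomial.nodup_roots hsep
  have hsplits : p.Splits := IsAlgClosed.splits p
  have hcard : Multiset.card p.roots = 4 := by
    have h := hsplits.natDegree_eq_card_roots
    rw [← h, hdeg]
  set L := p.roots.toList with hL
  have hlen : L.length = 4 := by simp [hL, hcard]
  have hndL : L.Nodup := by rw [← Multiset.coe_nodup, Multiset.coe_toList]; exact hnd
  have hroot : ∀ i : Fin 4, (L.get (Fin.cast hlen.symm i))^4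
      - a * (L.get (Fin.cast hlen.symm i)) + b = 0 := by
    intro i
    have hmem : L.get (Fin.cast hlen.symm i) ∈ p.roots := by
      rw [← Multiset.mem_toList]; exact List.get_mem _ _
    have h := Polynomial.isRoot_of_mem_roots hmem
    simpa only [Polynomial.IsRoot, hp, Polynomial.eval_add, Polynomial.eval_sub,
      Polynomial.eval_mul, Polynomial.eval_pow, Polynomial.eval_X, Polynomial.eval_C] using h
  refine ⟨fun i => L.get (Fin.cast hlen.symm i), ?_, ?_, ?_⟩
  · intro i j hij
    have := (List.nodup_iff_injective_get.mp hndL) hij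
    simpa [Fin.ext_iff] using this
  · intro i; linear_combination hroot i
  · intro i; exact re_ne_zero_of_root a b _ ha hbre hbim (hroot i)

open intervalIntegral in
lemma integral_exp_neg_mu (μ T : ℝ) (hμ : 0 < μ) :
    ∫ ξ in (0:ℝ)..T, Real.exp (-μ*ξ) = (1 - Real.exp (-μ*T))/μ := by
  have h : ∀ ξ ∈ Set.uIcc (0:ℝ) T,
      HasDerivAt (fun ξ => -Real.exp (-μ*ξ)/μ) (Real.exp (-μ*ξ)) ξ := by
    intro ξ _
    have h1 : HasDerivAt (fun ξ : ℝ => -μ*ξ) (-μ) ξ := by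
      simpa using (hasDerivAt_id ξ).const_mul (-μ)
    have h2 := (Real.hasDerivAt_exp (-μ*ξ)).comp ξ h1
    have h3 := (h2.div_const μ).neg
    convert h3 using 1
    · rfl
    · rfl
    · funext x; simp [Function.comp, neg_div]
    rw [mul_neg, neg_div, neg_neg, mul_div_assoc, div_self hμ.ne', mul_one]
  rw [intervalIntegral.integral_eq_sub_of_hasDerivAt h
    ((Real.continuous_exp.comp (continuous_const.mul continuous_id)).intervalIntegrable 0 T)]
  field_simp
  ring_nf; rw [Real.exp_zero]; ring

lemma cexp_cont (z : ℂ) : Continuous (fun ξ : ℝ => Complex.exp (z * ξ)) :=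
  Complex.continuous_exp.comp (continuous_const.mul Complex.continuous_ofReal)

set_option maxHeartbeats 1000000 in
/-- If a finite exponential sum is bounded on ℝ and k has maximal, positive real part,
then its coefficient vanishes. -/
lemma coeff_zero_top {ι : Type*} [DecidableEq ι] (S : Finset ι) (lam c : ι → ℂ) (M : ℝ)
    (hbd : ∀ ξ : ℝ, ‖∑ j ∈ S, c j * Complex.exp (lam j * ξ)‖ ≤ M)
    (k : ι) (hk : k ∈ S) (hkre : 0 < (lam k).re)
    (hne : ∀ j ∈ S, j ≠ k → lam j ≠ lam k)
    (hmax : ∀ j ∈ S, (lam j).re ≤ (lam k).re) : c k = 0 := by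
  set μ := (lam k).re with hμ
  set f : ℝ → ℂ := fun ξ => ∑ j ∈ S, c j * Complex.exp ((lam j - lam k) * ξ) with hf
  have hfeq : ∀ ξ : ℝ, f ξ = Complex.exp (-(lam k) * ξ) * ∑ j ∈ S, c j * Complex.exp (lam j * ξ) := by
    intro ξ
    rw [Finset.mul_sum, hf]
    refine Finset.sum_congr rfl fun j _ => ?_
    rw [mul_left_comm, ← Complex.exp_add]
    congr 2
    ring
  have hfbd : ∀ ξ : ℝ, ‖f ξ‖ ≤ M * Real.exp (-μ * ξ) := by
    intro ξ
    rw [hfeq ξ, norm_mul, Complex.norm_exp]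
    have : (-(lam k) * ξ).re = -μ * ξ := by
      simp [Complex.mul_re, hμ]
    rw [this, mul_comm]
    exact mul_le_mul_of_nonneg_right (hbd ξ) (Real.exp_pos _).le
  -- value of the integral
  have hint : ∀ T : ℝ, ∫ ξ in (0:ℝ)..T, f ξ =
      c k * T + ∑ j ∈ S.erase k, c j *
        ((Complex.exp ((lam j - lam k) * T) - 1) / (lam j - lam k)) := by
    intro T
    rw [hf]
    beta_reduce
    rw [intervalIntegral.integral_finset_sum (f := fun j ξ => c j * Complex.exp ((lam j - lam k) * ξ))
      (fun j _ => ((continuous_const.mul (cexp_cont _)).intervalIntegrable 0 T))]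
    rw [← Finset.add_sum_erase _ _ hk]
    congr 1
    · have heq : (fun ξ : ℝ => c k * Complex.exp ((lam k - lam k) * ξ)) = fun _ => c k := by
        funext ξ; simp
      rw [heq, intervalIntegral.integral_const, sub_zero, Complex.real_smul, mul_comm]
    · refine Finset.sum_congr rfl fun j hj => ?_
      rw [intervalIntegral.integral_const_mul, integral_exp_mul_complex
        (sub_ne_zero.mpr (hne j (Finset.mem_of_mem_erase hj) (Finset.ne_of_mem_erase hj)))]
      simp
  -- bounds
  have hM0 : 0 ≤ M := le_trans (norm_nonneg _) (hbd 0)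
  set C : ℝ := M/μ + ∑ j ∈ S.erase k, ‖c j‖ * (2/‖lam j - lam k‖) with hC
  have hC0 : 0 ≤ C := by
    apply add_nonneg (by positivity)
    exact Finset.sum_nonneg fun j _ => by positivity
  have hkey : ∀ T : ℝ, 0 < T → ‖c k‖ * T ≤ C := by
    intro T hT
    have h1 : ‖∫ ξ in (0:ℝ)..T, f ξ‖ ≤ M/μ := by
      have hb := intervalIntegral.norm_integral_le_abs_of_norm_le (μ := MeasureTheory.volume)
        (Filter.Eventually.of_forall (fun t => hfbd t))
        (Continuous.intervalIntegrable (by continuity : Continuous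
          (fun ξ : ℝ => M * Real.exp (-μ*ξ))) 0 T)
      refine hb.trans ?_
      rw [intervalIntegral.integral_const_mul, integral_exp_neg_mu μ T hkre]
      have he1 : Real.exp (-μ*T) ≤ 1 := Real.exp_le_one_iff.mpr (by nlinarith)
      have he0 : 0 < Real.exp (-μ*T) := Real.exp_pos _
      rw [abs_of_nonneg (mul_nonneg hM0 (div_nonneg (by linarith) hkre.le))]
      have hd : (1 - Real.exp (-μ*T))/μ ≤ 1/μ := by gcongr <;> linarith
      calc M * ((1 - Real.exp (-μ*T))/μ) ≤ M * (1/μ) := mul_le_mul_of_nonneg_left hd hM0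
        _ = M/μ := by ring
    have h2 : ‖∑ j ∈ S.erase k, c j *
        ((Complex.exp ((lam j - lam k) * T) - 1) / (lam j - lam k))‖ ≤
        ∑ j ∈ S.erase k, ‖c j‖ * (2/‖lam j - lam k‖) := by
      refine (norm_sum_le _ _).trans (Finset.sum_le_sum fun j hj => ?_)
      rw [norm_mul, norm_div]
      have hΔ : (0:ℝ) < ‖lam j - lam k‖ := by
        rw [norm_pos_iff]
        exact sub_ne_zero.mpr (hne j (Finset.mem_of_mem_erase hj) (Finset.ne_of_mem_erase hj))
      have hexp : ‖Complex.exp ((lam j - lam k) * T) - 1‖ ≤ 2 := by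
        refine (norm_sub_le _ _).trans ?_
        rw [Complex.norm_exp]
        have hre : ((lam j - lam k) * T).re ≤ 0 := by
          have := hmax j (Finset.mem_of_mem_erase hj)
          simp only [Complex.mul_re, Complex.ofReal_re, Complex.ofReal_im, Complex.sub_re]
          nlinarith
        have h1e := Real.exp_le_one_iff.mpr hre
        have h1n : ‖(1:ℂ)‖ = 1 := norm_one
        rw [h1n]
        linarith
      have h3 : ‖Complex.exp ((lam j - lam k) * T) - 1‖ / ‖lam j - lam k‖ ≤ 2 / ‖lam j - lam k‖ := by
        gcongr
      exact mul_le_mul_of_nonneg_left h3 (norm_nonneg _)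
    have heqT : (c k * T : ℂ) = (∫ ξ in (0:ℝ)..T, f ξ) - ∑ j ∈ S.erase k, c j *
        ((Complex.exp ((lam j - lam k) * T) - 1) / (lam j - lam k)) := by
      rw [hint T]; ring
    have : ‖c k * (T:ℂ)‖ ≤ M/μ + ∑ j ∈ S.erase k, ‖c j‖ * (2/‖lam j - lam k‖) := by
      rw [heqT]
      exact (norm_sub_le _ _).trans (add_le_add h1 h2)
    rw [norm_mul, Complex.norm_real, Real.norm_eq_abs, abs_of_pos hT] at this
    exact this
  by_contra hck
  have hck0 : 0 < ‖c k‖ := norm_pos_iff.mpr hck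
  have := hkey ((C+1)/‖c k‖) (by positivity)
  rw [mul_div_cancel₀ _ hck0.ne'] at this
  linarith

lemma coeff_all_zero {ι : Type*} [DecidableEq ι] (lam c : ι → ℂ)
    (hinj : Function.Injective lam) (hre : ∀ i, (lam i).re ≠ 0) :
    ∀ (n : ℕ) (S : Finset ι), S.card = n → ∀ M : ℝ,
      (∀ ξ : ℝ, ‖∑ j ∈ S, c j * Complex.exp (lam j * ξ)‖ ≤ M) → ∀ j ∈ S, c j = 0 := by
  intro n
  induction n with
  | zero => intro S hS M _ j hj; rw [Finset.card_eq_zero] at hS; simp [hS] at hj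
  | succ n ih =>
    intro S hS M hbd j hj
    have hne : S.Nonempty := ⟨j, hj⟩
    -- find an element with zero coefficient
    have hstep : ∃ k ∈ S, c k = 0 := by
      obtain ⟨k, hkS, hmax⟩ := S.exists_max_image (fun j => (lam j).re) hne
      rcases lt_or_gt_of_ne (hre k) with hneg | hpos
      · -- all real parts negative: mirror
        obtain ⟨k', hk'S, hmin⟩ := S.exists_min_image (fun j => (lam j).re) hne
        refine ⟨k', hk'S, ?_⟩
        have hbd' : ∀ ξ : ℝ, ‖∑ j ∈ S, c j * Complex.exp ((-lam j) * ξ)‖ ≤ M := by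
          intro ξ
          have := hbd (-ξ)
          convert this using 3 with j hj
          push_cast
          ring_nf
        refine coeff_zero_top S (fun i => -lam i) c M hbd' k' hk'S ?_ ?_ ?_
        · simp only [Complex.neg_re, neg_pos]
          exact lt_of_le_of_lt (hmin k hkS) hneg
        · intro j hjS hjk heq
          exact hjk (hinj (neg_injective heq))
        · intro j hjS
          simp only [Complex.neg_re, neg_le_neg_iff]
          exact hmin j hjS
      · refine ⟨k, hkS, ?_⟩
        refine coeff_zero_top S lam c M hbd k hkS hpos ?_ hmax
        intro j hjS hjk heq
        exact hjk (hinj heq)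
    obtain ⟨k, hkS, hck⟩ := hstep
    by_cases hjk : j = k
    · rw [hjk]; exact hck
    · refine ih (S.erase k) (by rw [Finset.card_erase_of_mem hkS, hS]; rfl) M ?_ j
        (Finset.mem_erase.mpr ⟨hjk, hj⟩)
      intro ξ
      have hsum : ∑ j ∈ S.erase k, c j * Complex.exp (lam j * ξ)
          = ∑ j ∈ S, c j * Complex.exp (lam j * ξ) := by
        rw [← Finset.add_sum_erase _ _ hkS, hck, zero_mul, zero_add]
      rw [hsum]; exact hbd ξ


noncomputable def vf (a b : ℂ) : (Fin 4 → ℂ) → (Fin 4 → ℂ) :=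
  fun y => ![y 1, y 2, y 3, a * y 1 - b * y 0]

lemma vf_lipschitz (a b : ℂ) : LipschitzWith (1 + ‖a‖₊ + ‖b‖₊) (vf a b) := by
  refine LipschitzWith.of_dist_le_mul fun y z => ?_
  have hK : ((1 + ‖a‖₊ + ‖b‖₊ : NNReal) : ℝ) = 1 + ‖a‖ + ‖b‖ := by push_cast; rfl
  rw [hK]
  refine (dist_pi_le_iff (by positivity)).mpr fun i => ?_
  have hcoord : ∀ j : Fin 4, dist (y j) (z j) ≤ dist y z := fun j => dist_le_pi_dist y z j
  have hd : 0 ≤ dist y z := dist_nonneg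
  fin_cases i
  · simpa [vf] using le_trans (hcoord 1) (by nlinarith [mul_nonneg (norm_nonneg a) hd, mul_nonneg (norm_nonneg b) hd])
  · simpa [vf] using le_trans (hcoord 2) (by nlinarith [mul_nonneg (norm_nonneg a) hd, mul_nonneg (norm_nonneg b) hd])
  · simpa [vf] using le_trans (hcoord 3) (by nlinarith [mul_nonneg (norm_nonneg a) hd, mul_nonneg (norm_nonneg b) hd])
  · show dist (a * y 1 - b * y 0) (a * z 1 - b * z 0) ≤ _
    rw [dist_eq_norm]
    have : a * y 1 - b * y 0 - (a * z 1 - b * z 0) = a * (y 1 - z 1) - b * (y 0 - z 0) := by ring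
    rw [this]
    refine le_trans (norm_sub_le _ _) ?_
    rw [norm_mul, norm_mul]
    have h1 : ‖y 1 - z 1‖ ≤ dist y z := by rw [← dist_eq_norm]; exact hcoord 1
    have h0 : ‖y 0 - z 0‖ ≤ dist y z := by rw [← dist_eq_norm]; exact hcoord 0
    nlinarith [norm_nonneg a, norm_nonneg b, norm_nonneg (y 1 - z 1), norm_nonneg (y 0 - z 0)]

lemma exp_hasDerivAt (lam : ℂ) (c : ℂ) (k : ℕ) (ξ : ℝ) :
    HasDerivAt (fun ξ : ℝ => c * lam ^ k * Complex.exp (lam * ξ))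
      (c * lam ^ (k+1) * Complex.exp (lam * ξ)) ξ := by
  have h1 := (((hasDerivAt_id (ξ:ℂ)).const_mul lam).cexp).const_mul (c * lam ^ k)
  simp only [id_eq, mul_one] at h1
  have h2 := h1.comp_ofReal
  convert h2 using 1
  ring

lemma representation (a b : ℂ) (u : ℝ → ℂ) (hreg : ContDiff ℝ 4 u)
    (hode : ∀ ξ : ℝ, iteratedDeriv 4 u ξ = a * deriv u ξ - b * u ξ)
    (lam : Fin 4 → ℂ) (hlam : ∀ i, (lam i)^4 = a * lam i - b)
    (hinj : Function.Injective lam) :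
    ∃ c : Fin 4 → ℂ, ∀ ξ : ℝ, u ξ = ∑ j, c j * Complex.exp (lam j * ξ) := by
  classical
  set V : Matrix (Fin 4) (Fin 4) ℂ := Matrix.of fun i j => lam j ^ (i : ℕ) with hV
  have hVdet : IsUnit V.det := by
    have hVt : V = Matrix.transpose (Matrix.vandermonde lam) := by
      ext i j
      simp [hV, Matrix.vandermonde, Matrix.transpose_apply]
    rw [hVt, Matrix.det_transpose, Matrix.det_vandermonde, isUnit_iff_ne_zero]
    refine Finset.prod_ne_zero_iff.mpr fun i _ => Finset.prod_ne_zero_iff.mpr fun j hj => ?_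
    rw [sub_ne_zero]
    intro h
    exact (Finset.mem_Ioi.mp hj).ne' (hinj h)
  set y0 : Fin 4 → ℂ := fun i => iteratedDeriv (i : ℕ) u 0 with hy0
  set c : Fin 4 → ℂ := V⁻¹.mulVec y0 with hcdef
  have hc : V.mulVec c = y0 := by
    rw [hcdef, Matrix.mulVec_mulVec, Matrix.mul_nonsing_inv _ hVdet, Matrix.one_mulVec]
  refine ⟨c, ?_⟩
  -- the two solutions of the first order system
  set Y : ℝ → (Fin 4 → ℂ) := fun ξ i => iteratedDeriv (i : ℕ) u ξ with hY
  set G : ℝ → (Fin 4 → ℂ) :=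
    fun ξ i => ∑ j, c j * (lam j) ^ (i : ℕ) * Complex.exp (lam j * ξ) with hG
  have hudiff : ∀ k : ℕ, k < 4 → Differentiable ℝ (iteratedDeriv k u) := by
    intro k hk
    exact hreg.differentiable_iteratedDeriv k (by exact_mod_cast hk)
  have hYd : ∀ ξ : ℝ, HasDerivAt Y (vf a b (Y ξ)) ξ := by
    intro ξ
    rw [hasDerivAt_pi]
    intro i
    fin_cases i
    · show HasDerivAt (fun ξ => iteratedDeriv 0 u ξ) (iteratedDeriv 1 u ξ) ξ
      have := ((hudiff 0 (by norm_num)) ξ).hasDerivAt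
      rwa [← iteratedDeriv_succ] at this
    · show HasDerivAt (fun ξ => iteratedDeriv 1 u ξ) (iteratedDeriv 2 u ξ) ξ
      have := ((hudiff 1 (by norm_num)) ξ).hasDerivAt
      rwa [← iteratedDeriv_succ] at this
    · show HasDerivAt (fun ξ => iteratedDeriv 2 u ξ) (iteratedDeriv 3 u ξ) ξ
      have := ((hudiff 2 (by norm_num)) ξ).hasDerivAt
      rwa [← iteratedDeriv_succ] at this
    · show HasDerivAt (fun ξ => iteratedDeriv 3 u ξ)
        (a * iteratedDeriv 1 u ξ - b * iteratedDeriv 0 u ξ) ξ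
      have := ((hudiff 3 (by norm_num)) ξ).hasDerivAt
      rw [← iteratedDeriv_succ] at this
      rw [show (3+1 : ℕ) = 4 from rfl, hode ξ] at this
      simpa [iteratedDeriv_one, iteratedDeriv_zero] using this
  have hGd : ∀ ξ : ℝ, HasDerivAt G (vf a b (G ξ)) ξ := by
    intro ξ
    rw [hasDerivAt_pi]
    intro i
    have hsum : ∀ k : ℕ, HasDerivAt (fun ξ : ℝ => ∑ j, c j * (lam j) ^ k * Complex.exp (lam j * ξ))
        (∑ j, c j * (lam j) ^ (k+1) * Complex.exp (lam j * ξ)) ξ :=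
      fun k => HasDerivAt.fun_sum (fun j _ => exp_hasDerivAt (lam j) (c j) k ξ)
    fin_cases i
    · exact hsum 0
    · exact hsum 1
    · exact hsum 2
    · show HasDerivAt (fun ξ : ℝ => ∑ j, c j * (lam j) ^ (3:ℕ) * Complex.exp (lam j * ξ))
        (a * G ξ 1 - b * G ξ 0) ξ
      have h4 := hsum 3
      have : (∑ j, c j * (lam j) ^ (3+1) * Complex.exp (lam j * ξ)) = a * G ξ 1 - b * G ξ 0 := by
        rw [hG]
        simp only []
        rw [Finset.mul_sum, Finset.mul_sum, ← Finset.sum_sub_distrib]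
        refine Finset.sum_congr rfl fun j _ => ?_
        rw [show (3+1 : ℕ) = 4 from rfl, hlam j]
        simp only [Fin.val_one, Fin.val_zero, pow_one, pow_zero]
        ring
      rwa [this] at h4
  have hinit : Y 0 = G 0 := by
    funext i
    have : G 0 i = V.mulVec c i := by
      rw [hG, Matrix.mulVec, dotProduct]
      simp [hV, mul_comm]
    rw [hY]
    simp only []
    rw [this, hc, hy0]
  have huniq : ∀ ξ : ℝ, Y ξ = G ξ := by
    intro ξ
    have hmem : ξ ∈ Set.Ioo (-(|ξ|+1)) (|ξ|+1) := by
      constructor <;> cases abs_cases ξ <;> linarith [abs_nonneg ξ]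
    have h0 : (0:ℝ) ∈ Set.Ioo (-(|ξ|+1)) (|ξ|+1) := by
      constructor <;> linarith [abs_nonneg ξ]
    exact ODE_solution_unique_of_mem_Ioo (s := fun _ => Set.univ)
      (fun t _ => (vf_lipschitz a b).lipschitzOnWith)
      h0
      (fun t _ => ⟨hYd t, Set.mem_univ _⟩)
      (fun t _ => ⟨hGd t, Set.mem_univ _⟩)
      hinit hmem
  intro ξ
  have := congrFun (huniq ξ) 0
  rw [hY, hG] at this
  simpa using this

/-- Bounded C⁴ solutions of u'''' − s u' + iωℓ u = 0 vanish when ω ≠ 0, ℓ ≠ 0. -/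
theorem bounded_solution_trivial (s ω : ℝ) (hω : ω ≠ 0) (ℓ : ℤ) (hℓ : ℓ ≠ 0)
    (u : ℝ → ℂ) (hreg : ContDiff ℝ 4 u)
    (hbd : ∃ M : ℝ, ∀ ξ : ℝ, ‖u ξ‖ ≤ M)
    (heq : ∀ ξ : ℝ, iteratedDeriv 4 u ξ - (s : ℂ) * deriv u ξ
      + Complex.I * (ω : ℂ) * (ℓ : ℂ) * u ξ = 0) :
    ∀ ξ : ℝ, u ξ = 0 := by
  classical
  set a : ℂ := (s : ℂ) with ha
  set b : ℂ := Complex.I * (ω : ℂ) * (ℓ : ℂ) with hb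
  have haim : a.im = 0 := by simp [ha]
  have hbre : b.re = 0 := by simp [hb]
  have hbim : b.im ≠ 0 := by
    simp [hb]
    exact ⟨hω, by exact_mod_cast hℓ⟩
  obtain ⟨lam, hinj, hroot, hre⟩ := exists_roots a b haim hbre hbim
  have hode : ∀ ξ : ℝ, iteratedDeriv 4 u ξ = a * deriv u ξ - b * u ξ := by
    intro ξ
    linear_combination heq ξ
  obtain ⟨c, hc⟩ := representation a b u hreg hode lam hroot hinj
  obtain ⟨M, hM⟩ := hbd
  have hbd' : ∀ ξ : ℝ, ‖∑ j ∈ Finset.univ, c j * Complex.exp (lam j * ξ)‖ ≤ M := by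
    intro ξ
    rw [← hc ξ]
    exact hM ξ
  have hzero : ∀ j ∈ (Finset.univ : Finset (Fin 4)), c j = 0 :=
    coeff_all_zero lam c hinj hre (Finset.univ.card) Finset.univ rfl M hbd'
  intro ξ
  rw [hc ξ]
  refine Finset.sum_eq_zero fun j hj => ?_
  rw [hzero j hj, zero_mul]
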